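/- Let u : ℝ → ℝ be a continuous viscosity solution of a(x)u'' + H(x,u') = λ on an open bounded interval I where inf_I a > 0, a is Lipschitz, and H is continuous. If u is Lipschitz on I, then u ∈ C²(I) and the equation holds pointwise on I. -/

import Mathlib

open Set Filter Topology

private lemma quad_contDiff (p q r : ℝ) : ContDiff ℝ 2 (fun t : ℝ => p + q * t + r * t ^ 2) :=
  (contDiff_const.add (contDiff_const.mul contDiff_id)).add
    (contDiff_const.mul (contDiff_id.pow 2))

private lemma quad_hasDeriv (p q r t : ℝ) :
    HasDerivAt (fun t : ℝ => p + q * t + r * t ^ 2) (q + 2 * r * t) t := by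
  have h : HasDerivAt (fun t : ℝ => p + q * t + r * t ^ 2)
      (0 + q * 1 + r * ((2:ℕ) * t ^ (2 - 1))) t :=
    ((hasDerivAt_const t p).add ((hasDerivAt_id t).const_mul q)).add
      ((hasDerivAt_pow 2 t).const_mul r)
  convert h using 1
  push_cast; ring

private lemma quad_deriv2 (p q r t : ℝ) :
    deriv (deriv (fun t : ℝ => p + q * t + r * t ^ 2)) t = 2 * r := by
  have h1 : deriv (fun t : ℝ => p + q * t + r * t ^ 2) = fun t => q + 2 * r * t := by
    funext s; exact (quad_hasDeriv p q r s).deriv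
  rw [h1]
  have h : HasDerivAt (fun t : ℝ => q + 2 * r * t) (2 * r) t := by
    have := (hasDerivAt_const t q).add ((hasDerivAt_id t).const_mul (2 * r))
    exact this.congr_deriv (by ring)
  exact h.deriv

private lemma conv_aux {v : ℝ → ℝ} (hv : Continuous v) {α β c : ℝ}
    (hyp : ∀ φ : ℝ → ℝ, ContDiff ℝ 2 φ → ∀ x₀ ∈ Set.Ioo α β,
        IsLocalMax (fun x => v x - φ x) x₀ → -c ≤ deriv (deriv φ) x₀) :
    ConvexOn ℝ (Set.Ioo α β) (fun x => v x + c / 2 * x ^ 2) := by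
  set g : ℝ → ℝ := fun x => v x + c / 2 * x ^ 2 with hg
  have key : ∀ x ∈ Set.Ioo α β, ∀ y ∈ Set.Ioo α β, x < y → ∀ z, x < z → z < y →
      g z ≤ ((y - z) * g x + (z - x) * g y) / (y - x) := by
    intro x hx y hy hxy z hzx hzy
    by_contra hcon
    push_neg at hcon
    have hyx : (0:ℝ) < y - x := by linarith
    have hzx' : (0:ℝ) < z - x := by linarith
    have hyz' : (0:ℝ) < y - z := by linarith
    set m : ℝ := (g y - g x) / (y - x) with hm
    have hchord : ((y - z) * g x + (z - x) * g y) / (y - x) = g x + m * (z - x) := by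
      rw [hm]; field_simp; ring
    have hpos : 0 < g z - (g x + m * (z - x)) := by rw [← hchord]; linarith
    set δ : ℝ := (g z - (g x + m * (z - x))) / (2 * (z - x) * (y - z)) with hδ
    have hδpos : 0 < δ := by
      apply div_pos hpos; positivity
    set p : ℝ := g x - m * x - δ * x * y with hp
    set q : ℝ := m + δ * (x + y) with hq
    set r : ℝ := -(c / 2) - δ with hr
    set φ : ℝ → ℝ := fun t => p + q * t + r * t ^ 2 with hφ
    have hφx : φ x = v x := by
      simp only [hφ, hp, hq, hr, hg]; ring
    have hφy : φ y = v y := by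
      simp only [hφ, hp, hq, hr, hg, hm]; field_simp; ring
    have hφz : v z - φ z = (g z - (g x + m * (z - x))) / 2 := by
      simp only [hφ, hp, hq, hr, hg, hδ]
      field_simp
      ring
    have hφc : ContDiff ℝ 2 φ := quad_contDiff p q r
    have hcont : Continuous fun t => v t - φ t := hv.sub hφc.continuous
    obtain ⟨x₀, hx₀mem, hx₀max⟩ := isCompact_Icc.exists_isMaxOn
      (Set.nonempty_Icc.mpr hxy.le) hcont.continuousOn
    have hvz : 0 < v z - φ z := by rw [hφz]; linarith
    have h₀ : 0 < v x₀ - φ x₀ := lt_of_lt_of_le hvz (hx₀max ⟨hzx.le, hzy.le⟩)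
    have hx₀x : x₀ ≠ x := by
      rintro rfl; rw [show v x₀ - φ x₀ = -(φ x₀ - v x₀) by ring, hφx] at h₀; simp at h₀
    have hx₀y : x₀ ≠ y := by
      rintro rfl; rw [show v x₀ - φ x₀ = -(φ x₀ - v x₀) by ring, hφy] at h₀; simp at h₀
    have hx₀oo : x₀ ∈ Set.Ioo x y :=
      ⟨lt_of_le_of_ne hx₀mem.1 (Ne.symm hx₀x), lt_of_le_of_ne hx₀mem.2 hx₀y⟩
    have hx₀I : x₀ ∈ Set.Ioo α β := ⟨hx.1.trans hx₀oo.1, hx₀oo.2.trans hy.2⟩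
    have hloc : IsLocalMax (fun t => v t - φ t) x₀ :=
      hx₀max.isLocalMax (Icc_mem_nhds hx₀oo.1 hx₀oo.2)
    have hfin := hyp φ hφc x₀ hx₀I hloc
    rw [hφ, quad_deriv2] at hfin
    rw [hr] at hfin
    linarith
  refine ⟨convex_Ioo α β, ?_⟩
  intro x hx y hy s t hs ht hst
  simp only [smul_eq_mul]
  rcases eq_or_lt_of_le hs with hs0 | hs0
  · rw [← hs0] at hst ⊢
    rw [show t = 1 by linarith]
    simp
  rcases eq_or_lt_of_le ht with ht0 | ht0
  · rw [← ht0] at hst ⊢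
    rw [show s = 1 by linarith]
    simp
  have hseq : s = 1 - t := by linarith
  subst hseq
  rcases lt_trichotomy x y with hxy | hxy | hxy
  · have hyx : (0:ℝ) < y - x := by linarith
    have hz1 : x < (1 - t) * x + t * y := by nlinarith [mul_pos ht0 hyx]
    have hz2 : (1 - t) * x + t * y < y := by nlinarith [mul_pos hs0 hyx]
    have hkey := key x hx y hy hxy ((1 - t) * x + t * y) hz1 hz2
    have heq : ((y - ((1 - t) * x + t * y)) * g x + (((1 - t) * x + t * y) - x) * g y) / (y - x)
        = (1 - t) * g x + t * g y := by
      rw [show y - ((1 - t) * x + t * y) = (1 - t) * (y - x) by ring,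
        show ((1 - t) * x + t * y) - x = t * (y - x) by ring]
      field_simp
    rw [heq] at hkey
    exact hkey
  · rw [hxy, show (1 - t) * y + t * y = y by ring]
    exact le_of_eq (by ring)
  · have hyx : (0:ℝ) < x - y := by linarith
    have hz1 : y < (1 - t) * x + t * y := by nlinarith [mul_pos hs0 hyx]
    have hz2 : (1 - t) * x + t * y < x := by nlinarith [mul_pos ht0 hyx]
    have hkey := key y hy x hx hxy ((1 - t) * x + t * y) hz1 hz2
    have heq : ((x - ((1 - t) * x + t * y)) * g y + (((1 - t) * x + t * y) - y) * g x) / (x - y)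
        = (1 - t) * g x + t * g y := by
      rw [show x - ((1 - t) * x + t * y) = t * (x - y) by ring,
        show ((1 - t) * x + t * y) - y = (1 - t) * (x - y) by ring]
      field_simp
      ring
    rw [heq] at hkey
    exact hkey

private lemma touch_slope_max {u φ : ℝ → ℝ} {K A B x₀ p : ℝ} (hx₀ : x₀ ∈ Set.Ioo A B)
    (hlip : ∀ x ∈ Set.Ioo A B, ∀ y ∈ Set.Ioo A B, |u x - u y| ≤ K * |x - y|)
    (hφ : HasDerivAt φ p x₀)
    (hmax : IsLocalMax (fun x => u x - φ x) x₀) : |p| ≤ K := by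
  have ht := hasDerivAt_iff_tendsto_slope.mp hφ
  have hev : ∀ᶠ x in 𝓝 x₀, x ∈ Set.Ioo A B ∧ u x - φ x ≤ u x₀ - φ x₀ :=
    (isOpen_Ioo.eventually_mem hx₀).and hmax
  rw [abs_le]
  constructor
  · have hmono : 𝓝[>] x₀ ≤ 𝓝[≠] x₀ := nhdsWithin_mono _ fun x hx => ne_of_gt hx
    refine ge_of_tendsto (ht.mono_left hmono) ?_
    filter_upwards [hev.filter_mono nhdsWithin_le_nhds, self_mem_nhdsWithin] with x hx hxgt
    rw [slope_def_field]
    have hxx : (0:ℝ) < x - x₀ := sub_pos.2 hxgt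
    rw [le_div_iff₀ hxx]
    have h2 : |u x₀ - u x| ≤ K * |x₀ - x| := hlip x₀ hx₀ x hx.1
    rw [show |x₀ - x| = x - x₀ by rw [abs_sub_comm]; exact abs_of_pos hxx] at h2
    have h3 := abs_le.1 h2
    have h1 : u x - u x₀ ≤ φ x - φ x₀ := by linarith [hx.2]
    linarith [h3.2]
  · have hmono : 𝓝[<] x₀ ≤ 𝓝[≠] x₀ := nhdsWithin_mono _ fun x hx => ne_of_lt hx
    refine le_of_tendsto (ht.mono_left hmono) ?_
    filter_upwards [hev.filter_mono nhdsWithin_le_nhds, self_mem_nhdsWithin] with x hx hxlt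
    rw [slope_def_field]
    have hxx : x - x₀ < 0 := sub_neg.2 hxlt
    rw [div_le_iff_of_neg hxx]
    have h2 : |u x₀ - u x| ≤ K * |x₀ - x| := hlip x₀ hx₀ x hx.1
    rw [show |x₀ - x| = x₀ - x by exact abs_of_pos (by linarith)] at h2
    have h3 := abs_le.1 h2
    have h1 : u x - u x₀ ≤ φ x - φ x₀ := by linarith [hx.2]
    nlinarith [h3.1]

private lemma touch_slope_min {u φ : ℝ → ℝ} {K A B x₀ p : ℝ} (hx₀ : x₀ ∈ Set.Ioo A B)
    (hlip : ∀ x ∈ Set.Ioo A B, ∀ y ∈ Set.Ioo A B, |u x - u y| ≤ K * |x - y|)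
    (hφ : HasDerivAt φ p x₀)
    (hmin : IsLocalMin (fun x => u x - φ x) x₀) : |p| ≤ K := by
  have h1 : IsLocalMax (fun x => (-u x) - (-φ x)) x₀ := by
    have h2 := hmin.neg
    have : (fun x => -(u x - φ x)) = fun x => (-u x) - (-φ x) := by funext x; ring
    rwa [this] at h2
  have hlip' : ∀ x ∈ Set.Ioo A B, ∀ y ∈ Set.Ioo A B, |(-u x) - (-u y)| ≤ K * |x - y| := by
    intro x hx y hy
    rw [show (-u x) - (-u y) = -(u x - u y) by ring, abs_neg]
    exact hlip x hx y hy
  have := touch_slope_max hx₀ hlip' hφ.neg h1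
  rwa [abs_neg] at this

/-- `u` is a viscosity solution of `a u'' + H(x,u') = λ` on the open set `I`:
super- and subsolution test inequalities at every point of `I`. -/
def IsViscositySolutionOn (a : ℝ → ℝ) (H : ℝ → ℝ → ℝ) (lam : ℝ) (u : ℝ → ℝ)
    (I : Set ℝ) : Prop :=
  ContinuousOn u I ∧
    ∀ (φ : ℝ → ℝ) (x₀ : ℝ), x₀ ∈ I → ContDiff ℝ 2 φ →
      (IsLocalMin (fun x => u x - φ x) x₀ →
        a x₀ * deriv (deriv φ) x₀ + H x₀ (deriv φ x₀) ≤ lam) ∧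
      (IsLocalMax (fun x => u x - φ x) x₀ →
        lam ≤ a x₀ * deriv (deriv φ) x₀ + H x₀ (deriv φ x₀))

set_option maxHeartbeats 2000000 in
/-- Elliptic regularity: a Lipschitz viscosity solution of
`a u'' + H(x,u') = λ` on a bounded open interval where `a` is Lipschitz and
bounded away from zero is `C²` there, and the equation holds pointwise. -/
theorem viscosity_solution_regularity
    (a : ℝ → ℝ) (H : ℝ → ℝ → ℝ) (u : ℝ → ℝ) (lam A B : ℝ) (hAB : A < B)
    (ha_lip : ∃ L : ℝ, ∀ x y, |a x - a y| ≤ L * |x - y|)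
    (ha01 : ∀ x, 0 ≤ a x ∧ a x ≤ 1)
    (ha_pos : ∃ ε > (0:ℝ), ∀ x ∈ Set.Ioo A B, ε ≤ a x)
    (hH_cont : Continuous fun q : ℝ × ℝ => H q.1 q.2)
    (hu_cont : Continuous u)
    (hu_lip : ∃ K : ℝ, ∀ x ∈ Set.Ioo A B, ∀ y ∈ Set.Ioo A B,
      |u x - u y| ≤ K * |x - y|)
    (hu_visc : IsViscositySolutionOn a H lam u (Set.Ioo A B)) :
    ContDiffOn ℝ 2 u (Set.Ioo A B) ∧
      ∀ x ∈ Set.Ioo A B,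
        a x * deriv (deriv u) x + H x (deriv u x) = lam := by
  obtain ⟨-, hvisc⟩ := hu_visc
  obtain ⟨K₀, hK₀⟩ := hu_lip
  set K : ℝ := |K₀| with hKdef
  have hK : ∀ x ∈ Set.Ioo A B, ∀ y ∈ Set.Ioo A B, |u x - u y| ≤ K * |x - y| := fun x hx y hy =>
    (hK₀ x hx y hy).trans (mul_le_mul_of_nonneg_right (le_abs_self K₀) (abs_nonneg _))
  have hKnn : 0 ≤ K := abs_nonneg _
  obtain ⟨ε, hε, ha⟩ := ha_pos
  obtain ⟨C, hC⟩ := (isCompact_Icc.prod isCompact_Icc).exists_bound_of_continuousOn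
      (s := Set.Icc A B ×ˢ Set.Icc (-K) K) hH_cont.continuousOn
  have hC0 : 0 ≤ C :=
    le_trans (norm_nonneg _) (hC (A, 0) ⟨⟨le_refl A, hAB.le⟩, ⟨neg_nonpos.mpr hKnn, hKnn⟩⟩)
  set M : ℝ := max ((|lam| + C) / ε) 0 with hMdef
  have hM0 : 0 ≤ M := le_max_right _ _
  have hMC : (|lam| + C) / ε ≤ M := le_max_left _ _
  -- key step: second-derivative bounds at touching points
  have ks_max : ∀ φ : ℝ → ℝ, ContDiff ℝ 2 φ → ∀ x₀ ∈ Set.Ioo A B,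
      IsLocalMax (fun x => u x - φ x) x₀ → -M ≤ deriv (deriv φ) x₀ := by
    intro φ hφ x₀ hx₀ hmax
    have hφd : HasDerivAt φ (deriv φ x₀) x₀ :=
      (hφ.differentiable (by norm_num)).differentiableAt.hasDerivAt
    have hvb := (hvisc φ x₀ hx₀ hφ).2 hmax
    have hp := touch_slope_max hx₀ hK hφd hmax
    have hHb : |H x₀ (deriv φ x₀)| ≤ C := by
      have := hC (x₀, deriv φ x₀) ⟨⟨hx₀.1.le, hx₀.2.le⟩, abs_le.1 hp⟩
      simpa [Real.norm_eq_abs] using this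
    have haε := ha x₀ hx₀
    have ha1 := (ha01 x₀).2
    set T := deriv (deriv φ) x₀ with hT
    have h1 : -(|lam| + C) ≤ a x₀ * T := by
      have h2 := abs_le.1 hHb
      have h3 := neg_abs_le lam
      linarith [h2.2, h3]
    rcases le_or_gt 0 T with h | h
    · linarith
    · have h2 : a x₀ * T ≤ ε * T := by nlinarith
      have h4 : -(|lam| + C) / ε ≤ T := (div_le_iff₀ hε).mpr (by linarith)
      have h5 : -(|lam| + C) / ε = -((|lam| + C) / ε) := neg_div _ _
      linarith
  have ks_min : ∀ φ : ℝ → ℝ, ContDiff ℝ 2 φ → ∀ x₀ ∈ Set.Ioo A B,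
      IsLocalMin (fun x => u x - φ x) x₀ → deriv (deriv φ) x₀ ≤ M := by
    intro φ hφ x₀ hx₀ hmin
    have hφd : HasDerivAt φ (deriv φ x₀) x₀ :=
      (hφ.differentiable (by norm_num)).differentiableAt.hasDerivAt
    have hvb := (hvisc φ x₀ hx₀ hφ).1 hmin
    have hp := touch_slope_min hx₀ hK hφd hmin
    have hHb : |H x₀ (deriv φ x₀)| ≤ C := by
      have := hC (x₀, deriv φ x₀) ⟨⟨hx₀.1.le, hx₀.2.le⟩, abs_le.1 hp⟩
      simpa [Real.norm_eq_abs] using this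
    have haε := ha x₀ hx₀
    have ha1 := (ha01 x₀).2
    set T := deriv (deriv φ) x₀ with hT
    have h1 : a x₀ * T ≤ |lam| + C := by
      have h2 := abs_le.1 hHb
      have h3 := le_abs_self lam
      linarith [h2.1, h3]
    rcases le_or_gt T 0 with h | h
    · linarith
    · have h2 : ε * T ≤ a x₀ * T := by nlinarith
      have h4 : T ≤ (|lam| + C) / ε := (le_div_iff₀ hε).mpr (by linarith)
      linarith
  have hcv1 : ConvexOn ℝ (Set.Ioo A B) (fun x => u x + M / 2 * x ^ 2) :=
    conv_aux hu_cont ks_max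
  have hcv2 : ConvexOn ℝ (Set.Ioo A B) (fun x => -u x + M / 2 * x ^ 2) := by
    apply conv_aux hu_cont.neg
    intro φ hφ x₀ hx₀ hmax
    have hmin : IsLocalMin (fun x => u x - (-φ x)) x₀ := by
      have h2 := hmax.neg
      have h3 : (fun x => -((-u) x - φ x)) = fun x => u x - (-φ x) := by
        funext x; simp only [Pi.neg_apply]; ring
      rwa [h3] at h2
    have h4 := ks_min (fun x => -φ x) hφ.neg x₀ hx₀ hmin
    have hd1 : deriv (fun x => -φ x) = fun x => -deriv φ x := funext fun x => deriv.neg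
    rw [hd1] at h4
    have hd2 : deriv (fun x => -deriv φ x) x₀ = -deriv (deriv φ) x₀ := deriv.neg
    rw [hd2] at h4
    linarith
  -- slope machinery
  set S : ℝ → ℝ → ℝ := fun x y => (u y - u x) / (y - x) with hSdef
  have hslope : ∀ x ∈ Set.Ioo A B, ∀ y₁ ∈ Set.Ioo A B, ∀ y₂ ∈ Set.Ioo A B,
      y₁ ≠ x → y₂ ≠ x → |S x y₂ - S x y₁| ≤ M / 2 * |y₂ - y₁| := by
    have ordered : ∀ x ∈ Set.Ioo A B, ∀ y₁ ∈ Set.Ioo A B, ∀ y₂ ∈ Set.Ioo A B,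
        y₁ ≠ x → y₂ ≠ x → y₁ ≤ y₂ →
        -(M / 2) * (y₂ - y₁) ≤ S x y₂ - S x y₁ ∧ S x y₂ - S x y₁ ≤ M / 2 * (y₂ - y₁) := by
      intro x hx y₁ hy₁ y₂ hy₂ hne₁ hne₂ hle
      have r1 : ∀ y, y ≠ x → (u y + M/2*y^2 - (u x + M/2*x^2)) / (y - x)
          = S x y + M/2*(x+y) := by
        intro y hy
        have hne : y - x ≠ 0 := sub_ne_zero.mpr hy
        rw [hSdef]
        field_simp
        ring
      have r2 : ∀ y, y ≠ x → (-u y + M/2*y^2 - (-u x + M/2*x^2)) / (y - x)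
          = -(S x y) + M/2*(x+y) := by
        intro y hy
        have hne : y - x ≠ 0 := sub_ne_zero.mpr hy
        rw [hSdef]
        field_simp
        ring
      have e1 := hcv1.secant_mono hx hy₁ hy₂ hne₁ hne₂ hle
      have e2 := hcv2.secant_mono hx hy₁ hy₂ hne₁ hne₂ hle
      rw [r1 y₁ hne₁, r1 y₂ hne₂] at e1
      rw [r2 y₁ hne₁, r2 y₂ hne₂] at e2
      constructor <;> linarith
    intro x hx y₁ hy₁ y₂ hy₂ hne₁ hne₂
    rcases le_total y₁ y₂ with hle | hle
    · have h := ordered x hx y₁ hy₁ y₂ hy₂ hne₁ hne₂ hle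
      rw [abs_le, show |y₂ - y₁| = y₂ - y₁ from abs_of_nonneg (by linarith)]
      constructor <;> linarith [h.1, h.2]
    · have h := ordered x hx y₂ hy₂ y₁ hy₁ hne₂ hne₁ hle
      rw [abs_sub_comm, abs_le, show |y₂ - y₁| = y₁ - y₂ by rw [abs_sub_comm]; exact abs_of_nonneg (by linarith)]
      constructor <;> linarith [h.1, h.2]
  -- the candidate derivative
  have hmid : ∀ x ∈ Set.Ioo A B, (x + B) / 2 ∈ Set.Ioo A B ∧ (x + B) / 2 ≠ x := by
    intro x hx
    obtain ⟨h1, h2⟩ := hx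
    refine ⟨⟨by linarith, by linarith⟩, by intro h; nlinarith [congrArg (fun t : ℝ => t - x) h]⟩
  set E : ℝ → Set ℝ := fun x => (fun y => S x y + M / 2 * |y - x|) '' (Set.Ioo A B \ {x}) with hE
  set d : ℝ → ℝ := fun x => sInf (E x) with hd
  have hEne : ∀ x ∈ Set.Ioo A B, (E x).Nonempty := by
    intro x hx
    obtain ⟨hm, hne⟩ := hmid x hx
    exact ⟨_, ⟨(x + B) / 2, ⟨hm, hne⟩, rfl⟩⟩
  have hlb : ∀ x ∈ Set.Ioo A B, ∀ y ∈ Set.Ioo A B, y ≠ x →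
      ∀ z ∈ E x, S x y - M / 2 * |y - x| ≤ z := by
    rintro x hx y hy hne z ⟨y', ⟨hy', hne'⟩, rfl⟩
    have hne'' : y' ≠ x := fun h => hne' (by simp [h])
    have h := hslope x hx y hy y' hy' hne hne''
    have htri : |y' - y| ≤ |y' - x| + |y - x| := by
      calc |y' - y| ≤ |y' - x| + |x - y| := abs_sub_le y' x y
        _ = |y' - x| + |y - x| := by rw [abs_sub_comm x y]
    have hmul := mul_le_mul_of_nonneg_left htri (show (0:ℝ) ≤ M/2 by linarith)
    have h2 := (abs_le.1 h).1
    linarith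
  have hEbdd : ∀ x ∈ Set.Ioo A B, BddBelow (E x) := by
    intro x hx
    obtain ⟨hm, hne⟩ := hmid x hx
    exact ⟨_, fun z hz => hlb x hx _ hm hne z hz⟩
  have dbound : ∀ x ∈ Set.Ioo A B, ∀ y ∈ Set.Ioo A B, y ≠ x →
      |d x - S x y| ≤ M / 2 * |y - x| := by
    intro x hx y hy hne
    have hup : d x ≤ S x y + M / 2 * |y - x| :=
      csInf_le (hEbdd x hx) ⟨y, ⟨hy, hne⟩, rfl⟩
    have hlo : S x y - M / 2 * |y - x| ≤ d x :=
      le_csInf (hEne x hx) (hlb x hx y hy hne)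
    rw [abs_le]
    constructor <;> linarith
  have hderiv : ∀ x ∈ Set.Ioo A B, HasDerivAt u (d x) x := by
    intro x hx
    rw [hasDerivAt_iff_tendsto_slope]
    have hb : Tendsto (fun y => M / 2 * |y - x|) (𝓝[≠] x) (𝓝 0) := by
      have h1 : Tendsto (fun y : ℝ => M / 2 * |y - x|) (𝓝 x) (𝓝 (M / 2 * |x - x|)) :=
        (continuous_const.mul ((continuous_id.sub continuous_const).abs)).tendsto x
      simp only [sub_self, abs_zero, mul_zero] at h1
      exact h1.mono_left nhdsWithin_le_nhds
    have hsq : Tendsto (fun y => slope u x y - d x) (𝓝[≠] x) (𝓝 0) := by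
      apply squeeze_zero_norm' ?_ hb
      filter_upwards [(isOpen_Ioo.eventually_mem hx).filter_mono nhdsWithin_le_nhds,
        self_mem_nhdsWithin] with y hy hne
      have hne' : y ≠ x := hne
      rw [Real.norm_eq_abs, slope_def_field, abs_sub_comm]
      exact dbound x hx y hy hne'
    have := hsq.add (tendsto_const_nhds (x := d x))
    simpa using this
  have hd_lip : ∀ x ∈ Set.Ioo A B, ∀ x' ∈ Set.Ioo A B, |d x - d x'| ≤ M * |x - x'| := by
    intro x hx x' hx'
    rcases eq_or_ne x' x with rfl | hne
    · simp
    have h1 := dbound x hx x' hx' hne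
    have h2 := dbound x' hx' x hx (Ne.symm hne)
    have hSS : S x x' = S x' x := by
      simp only [hSdef]
      rw [show u x - u x' = -(u x' - u x) by ring, show x - x' = -(x' - x) by ring,
        neg_div_neg_eq]
    rw [hSS, abs_sub_comm x' x] at h1
    calc |d x - d x'| ≤ |d x - S x' x| + |S x' x - d x'| := abs_sub_le _ _ _
      _ = |d x - S x' x| + |d x' - S x' x| := by rw [abs_sub_comm (S x' x)]
      _ ≤ M / 2 * |x - x'| + M / 2 * |x - x'| := add_le_add h1 h2
      _ = M * |x - x'| := by ring
  have hd_cont : ContinuousOn d (Set.Ioo A B) := by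
    intro x hx
    rw [Metric.continuousWithinAt_iff]
    intro ε' hε'
    refine ⟨ε' / (M + 1), by positivity, fun x' hx' hdist => ?_⟩
    rw [Real.dist_eq] at hdist ⊢
    calc |d x' - d x| ≤ M * |x' - x| := hd_lip x' hx' x hx
      _ ≤ M * (ε' / (M + 1)) := mul_le_mul_of_nonneg_left hdist.le hM0
      _ < ε' := by
          rw [← mul_div_assoc, div_lt_iff₀ (by linarith : (0:ℝ) < M + 1)]
          nlinarith
  obtain ⟨L, hL⟩ := ha_lip
  have ha_cont : Continuous a := by
    have hlw : LipschitzWith (Real.toNNReal L) a := by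
      apply LipschitzWith.of_dist_le_mul
      intro x y
      rw [Real.dist_eq, Real.dist_eq]
      calc |a x - a y| ≤ L * |x - y| := hL x y
        _ ≤ Real.toNNReal L * |x - y| :=
            mul_le_mul_of_nonneg_right (Real.le_coe_toNNReal L) (abs_nonneg _)
    exact hlw.continuous
  set f : ℝ → ℝ := fun x => (lam - H x (d x)) / a x with hf
  have hapos : ∀ x ∈ Set.Ioo A B, 0 < a x := fun x hx => lt_of_lt_of_le hε (ha x hx)
  have hf_cont : ContinuousOn f (Set.Ioo A B) := by
    apply ContinuousOn.div
    · exact continuousOn_const.sub (by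
        have h := hH_cont.comp_continuousOn (continuousOn_id.prodMk hd_cont); exact h)
    · exact ha_cont.continuousOn
    · exact fun x hx => (hapos x hx).ne'
  have hprod : ∀ x ∈ Set.Ioo A B, a x * f x = lam - H x (d x) := by
    intro x hx
    rw [hf]
    field_simp [(hapos x hx).ne']
  have main : ∀ x₀ ∈ Set.Ioo A B, ∃ g : ℝ → ℝ, ContDiff ℝ 2 g ∧ u =ᶠ[𝓝 x₀] g ∧
      deriv (deriv g) x₀ = f x₀ := by
    intro x₀ hx₀
    set α := (A + x₀) / 2 with hα
    set β := (x₀ + B) / 2 with hβ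
    have hAα : A < α := by rw [hα]; linarith [hx₀.1]
    have hαx : α < x₀ := by rw [hα]; linarith [hx₀.1]
    have hxβ : x₀ < β := by rw [hβ]; linarith [hx₀.2]
    have hβB : β < B := by rw [hβ]; linarith [hx₀.2]
    have hsub : Set.Icc α β ⊆ Set.Ioo A B := fun t ht =>
      ⟨lt_of_lt_of_le hAα ht.1, lt_of_le_of_lt ht.2 hβB⟩
    have hαβ : α < β := hαx.trans hxβ
    set cl : ℝ → ℝ := fun t => max α (min t β) with hcl
    have hcl_cont : Continuous cl := continuous_const.max (continuous_id.min continuous_const)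
    have hcl_mem : ∀ t, cl t ∈ Set.Icc α β := by
      intro t
      exact ⟨le_max_left _ _, max_le hαβ.le (min_le_right _ _)⟩
    have hcl_id : ∀ t ∈ Set.Icc α β, cl t = t := by
      intro t ht
      rw [hcl]
      simp only
      rw [min_eq_left ht.2, max_eq_right ht.1]
    set ft : ℝ → ℝ := fun t => f (cl t) with hft
    have hft_cont : Continuous ft := hf_cont.comp_continuous hcl_cont fun t => hsub (hcl_mem t)
    have hfteq : ∀ t ∈ Set.Icc α β, ft t = f t := fun t ht => by rw [hft]; simp only; rw [hcl_id t ht]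
    set W : ℝ → ℝ := fun t => ∫ s in α..t, ft s with hWdef
    have hWd : ∀ t, HasDerivAt W (ft t) t := fun t =>
      (hft_cont.integral_hasStrictDerivAt α t).hasDerivAt
    have hW_diff : Differentiable ℝ W := fun t => (hWd t).differentiableAt
    have hW_cont : Continuous W := hW_diff.continuous
    set w : ℝ → ℝ := fun t => ∫ s in α..t, W s with hwdef
    have hwd : ∀ t, HasDerivAt w (W t) t := fun t =>
      (hW_cont.integral_hasStrictDerivAt α t).hasDerivAt
    have hw2 : ContDiff ℝ 2 w := by
      rw [show (2 : WithTop ℕ∞) = 1 + 1 from rfl, contDiff_succ_iff_deriv]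
      refine ⟨fun t => (hwd t).differentiableAt, by simp, ?_⟩
      have hdw : deriv w = W := funext fun t => (hwd t).deriv
      rw [hdw, contDiff_one_iff_deriv]
      refine ⟨fun t => (hWd t).differentiableAt, ?_⟩
      rw [funext fun t => (hWd t).deriv]
      exact hft_cont
    have hψderiv2 : ∀ ψ : ℝ → ℝ, ContDiff ℝ 2 ψ → Differentiable ℝ (deriv ψ) := by
      intro ψ hψ
      have h2 : ContDiff ℝ (1 + 1) ψ := by
        rw [← show (2 : WithTop ℕ∞) = 1 + 1 from rfl]; exact hψ
      exact ((contDiff_succ_iff_deriv.mp h2).2.2).differentiable (by norm_num)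
    set v : ℝ → ℝ := fun t => u t - w t with hv
    have hv_cont : Continuous v := hu_cont.sub hw2.continuous
    have hyp1 : ∀ ψ : ℝ → ℝ, ContDiff ℝ 2 ψ → ∀ x₁ ∈ Set.Ioo α β,
        IsLocalMax (fun x => v x - ψ x) x₁ → -(0:ℝ) ≤ deriv (deriv ψ) x₁ := by
      intro ψ hψ x₁ hx₁ hmax
      have hx₁I : x₁ ∈ Set.Ioo A B := hsub ⟨hx₁.1.le, hx₁.2.le⟩
      set φ : ℝ → ℝ := fun x => w x + ψ x with hφ
      have hφc : ContDiff ℝ 2 φ := hw2.add hψ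
      have hmax' : IsLocalMax (fun x => u x - φ x) x₁ := by
        have heq : (fun x => u x - φ x) = fun x => v x - ψ x := by
          funext x; rw [hφ, hv]; ring
        rwa [heq]
      have hvb := (hvisc φ x₁ hx₁I hφc).2 hmax'
      have hψ_d : Differentiable ℝ ψ := hψ.differentiable (by norm_num)
      have hψ_d2 : Differentiable ℝ (deriv ψ) := hψderiv2 ψ hψ
      have hφ' : deriv φ = fun x => W x + deriv ψ x :=
        funext fun x => ((hwd x).add (hψ_d x).hasDerivAt).deriv
      have hφ'' : deriv (deriv φ) x₁ = ft x₁ + deriv (deriv ψ) x₁ := by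
        rw [hφ']
        exact ((hWd x₁).add (hψ_d2 x₁).hasDerivAt).deriv
      have hcrit : deriv φ x₁ = d x₁ := by
        have h1 : HasDerivAt (fun x => u x - φ x) (d x₁ - deriv φ x₁) x₁ :=
          (hderiv x₁ hx₁I).sub ((hφc.differentiable (by norm_num)) x₁).hasDerivAt
        have h2 := hmax'.hasDerivAt_eq_zero h1
        linarith [h2]
      rw [hφ'', hcrit, hfteq x₁ ⟨hx₁.1.le, hx₁.2.le⟩] at hvb
      have hpr := hprod x₁ hx₁I
      have h0 : 0 ≤ a x₁ * deriv (deriv ψ) x₁ := by nlinarith [hvb, hpr]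
      have hψnn : 0 ≤ deriv (deriv ψ) x₁ := by
        by_contra hneg
        push_neg at hneg
        nlinarith [mul_neg_of_pos_of_neg (hapos x₁ hx₁I) hneg]
      linarith
    have hyp2 : ∀ ψ : ℝ → ℝ, ContDiff ℝ 2 ψ → ∀ x₁ ∈ Set.Ioo α β,
        IsLocalMax (fun x => (-v x) - ψ x) x₁ → -(0:ℝ) ≤ deriv (deriv ψ) x₁ := by
      intro ψ hψ x₁ hx₁ hmax
      have hx₁I : x₁ ∈ Set.Ioo A B := hsub ⟨hx₁.1.le, hx₁.2.le⟩
      set φ : ℝ → ℝ := fun x => w x - ψ x with hφ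
      have hφc : ContDiff ℝ 2 φ := hw2.sub hψ
      have hmin' : IsLocalMin (fun x => u x - φ x) x₁ := by
        have h2 := hmax.neg
        have heq : (fun x => -((-v x) - ψ x)) = fun x => u x - φ x := by
          funext x; rw [hφ, hv]; ring
        rwa [heq] at h2
      have hvb := (hvisc φ x₁ hx₁I hφc).1 hmin'
      have hψ_d : Differentiable ℝ ψ := hψ.differentiable (by norm_num)
      have hψ_d2 : Differentiable ℝ (deriv ψ) := hψderiv2 ψ hψ
      have hφ' : deriv φ = fun x => W x - deriv ψ x :=
        funext fun x => ((hwd x).sub (hψ_d x).hasDerivAt).deriv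
      have hφ'' : deriv (deriv φ) x₁ = ft x₁ - deriv (deriv ψ) x₁ := by
        rw [hφ']
        exact ((hWd x₁).sub (hψ_d2 x₁).hasDerivAt).deriv
      have hcrit : deriv φ x₁ = d x₁ := by
        have h1 : HasDerivAt (fun x => u x - φ x) (d x₁ - deriv φ x₁) x₁ :=
          (hderiv x₁ hx₁I).sub ((hφc.differentiable (by norm_num)) x₁).hasDerivAt
        have h2 := hmin'.hasDerivAt_eq_zero h1
        linarith [h2]
      rw [hφ'', hcrit, hfteq x₁ ⟨hx₁.1.le, hx₁.2.le⟩] at hvb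
      have hpr := hprod x₁ hx₁I
      have h0 : 0 ≤ a x₁ * deriv (deriv ψ) x₁ := by nlinarith [hvb, hpr]
      have hψnn : 0 ≤ deriv (deriv ψ) x₁ := by
        by_contra hneg
        push_neg at hneg
        nlinarith [mul_neg_of_pos_of_neg (hapos x₁ hx₁I) hneg]
      linarith
    have hcvx : ConvexOn ℝ (Set.Ioo α β) v := by
      have h := conv_aux hv_cont hyp1
      simpa using h
    have hccv : ConvexOn ℝ (Set.Ioo α β) (fun x => -v x) := by
      have h := conv_aux hv_cont.neg hyp2
      simpa using h
    set α' := (α + x₀) / 2 with hα'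
    set β' := (x₀ + β) / 2 with hβ'
    have hαα' : α < α' := by rw [hα']; linarith
    have hα'x : α' < x₀ := by rw [hα']; linarith
    have hxβ' : x₀ < β' := by rw [hβ']; linarith
    have hβ'β : β' < β := by rw [hβ']; linarith
    have hα'mem : α' ∈ Set.Ioo α β := ⟨hαα', (hα'x.trans hxβ').trans hβ'β⟩
    have hβ'mem : β' ∈ Set.Ioo α β := ⟨hαα'.trans (hα'x.trans hxβ'), hβ'β⟩
    have hβα : (0:ℝ) < β' - α' := by linarith
    have haffine : ∀ z ∈ Set.Ioo α' β',
        v z = ((β' - z) * v α' + (z - α') * v β') / (β' - α') := by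
      intro z hz
      set s := (β' - z) / (β' - α') with hs
      set t := (z - α') / (β' - α') with ht2
      have hzα' : α' < z := hz.1
      have hzβ' : z < β' := hz.2
      have hs0 : 0 ≤ s := by
        rw [hs]
        apply div_nonneg (by linarith) hβα.le
      have ht0 : 0 ≤ t := by
        rw [ht2]
        apply div_nonneg (by linarith) hβα.le
      have hst : s + t = 1 := by
        rw [hs, ht2]
        field_simp
        ring
      have hcomb : s * α' + t * β' = z := by
        rw [hs, ht2]
        field_simp
        ring
      have h1 := hcvx.2 hα'mem hβ'mem hs0 ht0 hst
      have h2 := hccv.2 hα'mem hβ'mem hs0 ht0 hst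
      simp only [smul_eq_mul] at h1 h2
      rw [hcomb] at h1 h2
      have heqv : v z = s * v α' + t * v β' := le_antisymm h1 (by linarith)
      rw [heqv, hs, ht2]
      field_simp
    set q2 : ℝ := (v β' - v α') / (β' - α') with hq2
    set g : ℝ → ℝ := fun t => w t + ((β' - t) * v α' + (t - α') * v β') / (β' - α') with hgdef
    have haff_d : ∀ t : ℝ,
        HasDerivAt (fun t => ((β' - t) * v α' + (t - α') * v β') / (β' - α')) q2 t := by
      intro t
      have h1 : HasDerivAt (fun t : ℝ => (β' - t) * v α') (-v α') t := by
        simpa using ((hasDerivAt_id t).const_sub β').mul_const (v α')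
      have h2 : HasDerivAt (fun t : ℝ => (t - α') * v β') (v β') t := by
        simpa using ((hasDerivAt_id t).sub_const α').mul_const (v β')
      have h3 := (h1.add h2).div_const (β' - α')
      rw [hq2]
      exact h3.congr_deriv (by ring)
    have hg_cd : ContDiff ℝ 2 g := by
      apply hw2.add
      apply ContDiff.div_const
      exact ((contDiff_const.sub contDiff_id).mul contDiff_const).add
        ((contDiff_id.sub contDiff_const).mul contDiff_const)
    have hev : u =ᶠ[𝓝 x₀] g := by
      filter_upwards [isOpen_Ioo.eventually_mem (⟨hα'x, hxβ'⟩ : x₀ ∈ Set.Ioo α' β')] with z hz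
      have h4 := haffine z hz
      rw [hgdef]
      simp only
      rw [← h4, hv]
      ring
    have hgd : ∀ t, HasDerivAt g (W t + q2) t := fun t => (hwd t).add (haff_d t)
    have hg'' : deriv (deriv g) x₀ = f x₀ := by
      have h1 : deriv g = fun t => W t + q2 := funext fun t => (hgd t).deriv
      rw [h1]
      have h2 : HasDerivAt (fun t => W t + q2) (ft x₀) x₀ := (hWd x₀).add_const q2
      rw [h2.deriv]
      exact hfteq x₀ ⟨hαx.le, hxβ.le⟩
    exact ⟨g, hg_cd, hev, hg''⟩
  constructor
  · intro x hx
    obtain ⟨g, hg2, hev, -⟩ := main x hx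
    exact ((hg2.contDiffAt).congr_of_eventuallyEq hev).contDiffWithinAt
  · intro x hx
    obtain ⟨g, hg2, hev, hg''⟩ := main x hx
    have h1 : deriv u x = d x := (hderiv x hx).deriv
    have h2 : deriv (deriv u) x = f x := by
      rw [(hev.deriv).deriv_eq, hg'']
    rw [h1, h2]
    have h3 := hprod x hx
    linarith
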